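/- Let H be a complex Hilbert space, let T be a bounded self-adjoint operator on H and let A be a compact self-adjoint operator on H such that T ∘ T = 16·I + A ∘ A. Then there exist bounded self-adjoint idempotent operators P₊ and P₋ on H (orthogonal projections) with P₊ + P₋ = I and P₊ ∘ P₋ = 0, and a compact self-adjoint operator K on H, such that T = 4·P₊ − 4·P₋ + K. -/

import Mathlib

open scoped Pointwise

/-- Abstract operator-theoretic core of Theorem 4.9: if `T` is bounded self-adjoint,
`A` is compact self-adjoint and `T ∘ T = 16·I + A ∘ A`, then `T = 4P₊ - 4P₋ + K` with
complementary orthogonal projections `P₊, P₋` and a compact self-adjoint `K`. -/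
theorem stmt_0 {H : Type*} [NormedAddCommGroup H] [InnerProductSpace ℂ H] [CompleteSpace H]
    (T A : H →L[ℂ] H) (hT : IsSelfAdjoint T) (hAsa : IsSelfAdjoint A)
    (hAc : IsCompactOperator (⇑A))
    (hTA : T ∘L T = (16 : ℂ) • (1 : H →L[ℂ] H) + A ∘L A) :
    ∃ Pp Pm K : H →L[ℂ] H,
      IsSelfAdjoint Pp ∧ IsSelfAdjoint Pm ∧
      Pp ∘L Pp = Pp ∧ Pm ∘L Pm = Pm ∧
      Pp + Pm = 1 ∧ Pp ∘L Pm = 0 ∧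
      IsSelfAdjoint K ∧ IsCompactOperator (⇑K) ∧
      T = (4 : ℂ) • Pp - (4 : ℂ) • Pm + K := by
  have hTA' : T * T = algebraMap ℝ (H →L[ℂ] H) 16 + A * A := by
    rw [ContinuousLinearMap.mul_def, ContinuousLinearMap.mul_def, hTA]
    congr 1
  have hA2 : (0 : H →L[ℂ] H) ≤ A * A := by
    simpa [hAsa.star_eq] using star_mul_self_nonneg A
  have hsq : T * T = cfc (fun x : ℝ => x * x) T := by
    rw [cfc_mul (fun x : ℝ => x) (fun x : ℝ => x) T, cfc_id' ℝ T]
  have h0 : ∀ x ∈ spectrum ℝ T, x ≠ 0 := by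
    intro x hx hx0
    have h1 : (0 : ℝ) ∈ spectrum ℝ (T * T) := by
      rw [hsq, cfc_map_spectrum (fun x : ℝ => x * x) T]
      exact ⟨x, hx, by simp [hx0]⟩
    rw [hTA', ← spectrum.singleton_add_eq] at h1
    obtain ⟨a, ha, b, hb, hab⟩ := h1
    rw [Set.mem_singleton_iff] at ha
    have := spectrum_nonneg_of_nonneg hA2 hb
    simp only [ha] at hab
    linarith
  set s := spectrum ℝ T with hs
  set f : ℝ → ℝ := fun x => if 0 < x then 1 else 0 with hfdef
  have hfpos : ∀ x : ℝ, 0 < x → f x = 1 := fun x hx => by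
    simp only [hfdef]; rw [if_pos hx]
  have hfneg : ∀ x : ℝ, ¬ 0 < x → f x = 0 := fun x hx => by
    simp only [hfdef]; rw [if_neg hx]
  have hfc : ∀ x : ℝ, x ≠ 0 → ContinuousAt f x := by
    intro x hx
    rcases hx.lt_or_gt with hlt | hgt
    · refine Filter.EventuallyEq.continuousAt (y := 0) ?_
      filter_upwards [Iio_mem_nhds hlt] with y hy
      exact hfneg y (not_lt.mpr (le_of_lt (Set.mem_Iio.mp hy)))
    · refine Filter.EventuallyEq.continuousAt (y := 1) ?_
      filter_upwards [Ioi_mem_nhds hgt] with y hy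
      exact hfpos y (Set.mem_Ioi.mp hy)
  have hfT : ContinuousOn f s := fun x hx => (hfc x (h0 x hx)).continuousWithinAt
  have hf1 : ContinuousOn (fun x => 1 - f x) s := continuousOn_const.sub hfT
  set g : ℝ → ℝ := fun x => x - 8 * f x + 4 with hgdef
  set h : ℝ → ℝ := fun x => x + 8 * f x - 4 with hhdef
  have hgT : ContinuousOn g s :=
    (continuousOn_id.sub (continuousOn_const.mul hfT)).add continuousOn_const
  have hhT : ContinuousOn h s :=
    (continuousOn_id.add (continuousOn_const.mul hfT)).sub continuousOn_const
  set Pp := cfc f T with hPp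
  set Pm := cfc (fun x => 1 - f x) T with hPm
  set K := cfc g T with hK
  have hff : ∀ x : ℝ, f x * f x = f x := fun x => by
    by_cases hx : 0 < x
    · rw [hfpos x hx]; norm_num
    · rw [hfneg x hx]; norm_num
  have hPpsa : IsSelfAdjoint Pp := cfc_predicate f T
  have hPmsa : IsSelfAdjoint Pm := cfc_predicate _ T
  have hKsa : IsSelfAdjoint K := cfc_predicate g T
  have hPp2 : Pp * Pp = Pp := by
    rw [hPp, ← cfc_mul f f T hfT hfT]
    exact cfc_congr fun x _ => hff x
  have hPm2 : Pm * Pm = Pm := by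
    rw [hPm, ← cfc_mul _ _ T hf1 hf1]
    refine cfc_congr fun x _ => ?_
    by_cases hx : 0 < x
    · rw [hfpos x hx]; norm_num
    · rw [hfneg x hx]; norm_num
  have hsum : Pp + Pm = 1 := by
    rw [hPp, hPm, ← cfc_add T f _ hfT hf1]
    have : cfc (fun x => f x + (1 - f x)) T = cfc (fun _ : ℝ => (1 : ℝ)) T :=
      cfc_congr fun x _ => by ring
    rw [this, cfc_const_one ℝ T]
  have hPpPm : Pp * Pm = 0 := by
    rw [hPp, hPm, ← cfc_mul _ _ T hfT hf1]
    have : cfc (fun x => f x * (1 - f x)) T = cfc (fun _ : ℝ => (0 : ℝ)) T :=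
      cfc_congr fun x _ => by
        by_cases hx : 0 < x
        · rw [hfpos x hx]; norm_num
        · rw [hfneg x hx]; norm_num
    rw [this, cfc_const_zero ℝ T]
  have hhne : ∀ x ∈ s, h x ≠ 0 := by
    intro x hx
    rcases (h0 x hx).lt_or_gt with hlt | hgt
    · have hx4 : h x = x - 4 := by
        simp only [hhdef]; rw [hfneg x (not_lt.mpr (le_of_lt hlt))]; ring
      rw [hx4]; intro hc; linarith
    · have hx4 : h x = x + 4 := by
        simp only [hhdef]; rw [hfpos x hgt]; ring
      rw [hx4]; intro hc; linarith
  obtain ⟨u, hu⟩ : IsUnit (cfc h T) := (isUnit_cfc_iff h T hhT hT).mpr hhne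
  have hKS : K * cfc h T = A * A := by
    rw [hK, ← cfc_mul g h T hgT hhT]
    have e1 : cfc (fun x => g x * h x) T = cfc (fun x : ℝ => x * x - 16) T := by
      refine cfc_congr fun x _ => ?_
      simp only [hgdef, hhdef]
      by_cases hx : 0 < x
      · rw [hfpos x hx]; ring
      · rw [hfneg x hx]; ring
    have e2 : cfc (fun x : ℝ => x * x - 16) T
        = cfc (fun x : ℝ => x * x) T - cfc (fun _ : ℝ => (16 : ℝ)) T :=
      cfc_sub _ _ T (continuousOn_id.mul continuousOn_id) continuousOn_const
    rw [e1, e2, ← hsq, cfc_const (16 : ℝ) T, hTA', add_sub_cancel_left]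
  have hKeq : K = (A * A) * (↑u⁻¹ : H →L[ℂ] H) := by
    have h1 : K * (cfc h T * (↑u⁻¹ : H →L[ℂ] H)) = K := by
      rw [← hu, Units.mul_inv, mul_one]
    rw [← h1, ← mul_assoc, hKS]
  have hKc : IsCompactOperator ⇑K := by
    have h1 : IsCompactOperator ⇑(A ∘L A) := by
      exact hAc.comp_clm A
    have h2 : IsCompactOperator ⇑((A ∘L A) ∘L (↑u⁻¹ : H →L[ℂ] H)) := by
      exact h1.comp_clm _
    have h3 : K = (A ∘L A) ∘L (↑u⁻¹ : H →L[ℂ] H) := by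
      rw [hKeq, ← ContinuousLinearMap.mul_def, ← ContinuousLinearMap.mul_def]
    rw [h3]; exact h2
  have e4 : ∀ B : H →L[ℂ] H, (4 : ℂ) • B = (4 : ℝ) • B := fun B => by
    rw [← Complex.coe_smul]; norm_num
  have hfinal : (4 : ℂ) • Pp - (4 : ℂ) • Pm + K = T := by
    rw [e4 Pp, e4 Pm, hPp, hPm, hK,
      ← cfc_const_mul (4 : ℝ) f T hfT, ← cfc_const_mul (4 : ℝ) _ T hf1,
      ← cfc_sub (fun x => 4 * f x) (fun x => 4 * (1 - f x)) T ((continuousOn_const.mul hfT)) ((continuousOn_const.mul hf1)),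
      ← cfc_add T (fun x => 4 * f x - 4 * (1 - f x)) g (((continuousOn_const.mul hfT)).sub ((continuousOn_const.mul hf1))) hgT]
    have : cfc (fun x => 4 * f x - 4 * (1 - f x) + g x) T = cfc (id : ℝ → ℝ) T :=
      cfc_congr fun x _ => by simp only [hgdef, id_eq]; ring
    rw [this, cfc_id ℝ T]
  refine ⟨Pp, Pm, K, hPpsa, hPmsa, ?_, ?_, hsum, ?_, hKsa, hKc, hfinal.symm⟩
  · rw [← ContinuousLinearMap.mul_def]; exact hPp2
  · rw [← ContinuousLinearMap.mul_def]; exact hPm2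
  · rw [← ContinuousLinearMap.mul_def]; exact hPpPm
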